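/- arXiv:2108.08820 — 6 statements merged into one kernel-verified Lean document; each statement's English description precedes it below -/
import Mathlib

section
/- Let ρ > 0, ψ₀ > 0, and let ψ₁, φ, A, u, L, a, b, q, m₃₁ be real numbers with A > 0. Define the 3×3 real matrix M_s with rows ( −(Aa/ψ₀)u , 1/ψ₀ , 0 ), ( q − (ψ₁ + 2ψ₁Aa/ψ₀ − Ab)u² , 2(ψ₁/ψ₀)u , 0 ), ( m₃₁ , (φ/ψ₀)L , φu ), and set Υ₁ = (1/ψ₀²)(ψ₁ − Aa/2)² + (1/ψ₀)(Ab − ψ₁). If q/ψ₀ + Υ₁u² ≥ 0, then the characteristic polynomial of M_s factors as det(M_s − λI) = (φu − λ)(λ − λ₊ˢ)(λ − λ₋ˢ), so the eigenvalues of M_s are exactly λ₀ˢ = φu and λ±ˢ = ((2ψ₁ − Aa)/(2ψ₀))·u ± √(q/ψ₀ + Υ₁u²), and in particular all eigenvalues of M_s are real. -/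
open Matrix

/-- The coefficient matrix `M_s` (axial direction) of the quasilinear form of the
2D blood-flow model, with the state abstracted into real parameters. -/
noncomputable def Ms (ψ₀ ψ₁ φ A u L a b q m₃₁ : ℝ) : Matrix (Fin 3) (Fin 3) ℝ :=
  !![-(A * a / ψ₀) * u, 1 / ψ₀, 0;
     q - (ψ₁ + 2 * ψ₁ * A * a / ψ₀ - A * b) * u ^ 2, 2 * (ψ₁ / ψ₀) * u, 0;
     m₃₁, (φ / ψ₀) * L, φ * u]

lemma spec_iff_det {K : Type*} [Field K] (M : Matrix (Fin 3) (Fin 3) K) (lam : K) :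
    lam ∈ spectrum K M ↔ (M - lam • (1 : Matrix (Fin 3) (Fin 3) K)).det = 0 := by
  rw [spectrum.mem_iff, Matrix.isUnit_iff_isUnit_det, isUnit_iff_ne_zero, not_not]
  have h : algebraMap K (Matrix (Fin 3) (Fin 3) K) lam - M = -(M - lam • 1) := by
    rw [Algebra.algebraMap_eq_smul_one]; abel
  rw [h, Matrix.det_neg]
  simp

theorem stmt0 (ρ ψ₀ ψ₁ φ A u L a b q m₃₁ : ℝ)
    (hρ : 0 < ρ) (hψ₀ : 0 < ψ₀) (hA : 0 < A)
    (Υ₁ : ℝ)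
    (hΥ₁ : Υ₁ = (1 / ψ₀ ^ 2) * (ψ₁ - A * a / 2) ^ 2 + (1 / ψ₀) * (A * b - ψ₁))
    (lamP lamM : ℝ)
    (hlamP : lamP = ((2 * ψ₁ - A * a) / (2 * ψ₀)) * u + Real.sqrt (q / ψ₀ + Υ₁ * u ^ 2))
    (hlamM : lamM = ((2 * ψ₁ - A * a) / (2 * ψ₀)) * u - Real.sqrt (q / ψ₀ + Υ₁ * u ^ 2))
    (hnn : 0 ≤ q / ψ₀ + Υ₁ * u ^ 2) :
    (∀ lam : ℝ,
      (Ms ψ₀ ψ₁ φ A u L a b q m₃₁ - lam • (1 : Matrix (Fin 3) (Fin 3) ℝ)).det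
        = (φ * u - lam) * (lam - lamP) * (lam - lamM)) ∧
    spectrum ℝ (Ms ψ₀ ψ₁ φ A u L a b q m₃₁) = {φ * u, lamP, lamM} ∧
    (∀ z ∈ spectrum ℂ ((Ms ψ₀ ψ₁ φ A u L a b q m₃₁).map (fun x : ℝ => (x : ℂ))),
      z.im = 0) := by
  have hψ : ψ₀ ≠ 0 := ne_of_gt hψ₀
  have hr : Real.sqrt (q / ψ₀ + Υ₁ * u ^ 2) ^ 2 = q / ψ₀ + Υ₁ * u ^ 2 :=
    Real.sq_sqrt hnn
  -- real determinant identity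
  have hdet : ∀ lam : ℝ,
      (Ms ψ₀ ψ₁ φ A u L a b q m₃₁ - lam • (1 : Matrix (Fin 3) (Fin 3) ℝ)).det
        = (φ * u - lam) * (lam - lamP) * (lam - lamM) := by
    intro lam
    rw [hlamP, hlamM]
    simp only [Ms, Matrix.det_fin_three, Matrix.sub_apply, Matrix.smul_apply,
      Matrix.one_apply, Matrix.cons_val', Matrix.cons_val_zero, Matrix.cons_val_one,
      Matrix.head_cons, Matrix.head_fin_const, Matrix.empty_val',
      Matrix.cons_val_fin_one, Matrix.cons_val_two, Matrix.tail_cons, Matrix.of_apply,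
      show (0:Fin 3) ≠ 1 by decide, show (0:Fin 3) ≠ 2 by decide,
      show (1:Fin 3) ≠ 0 by decide, show (1:Fin 3) ≠ 2 by decide,
      show (2:Fin 3) ≠ 0 by decide, show (2:Fin 3) ≠ 1 by decide]
    norm_num
    linear_combination (φ * u - lam) * hΥ₁ * u ^ 2 + (φ * u - lam) * hr
  refine ⟨hdet, ?_, ?_⟩
  · -- real spectrum
    ext lam
    rw [spec_iff_det, hdet lam]
    simp only [mul_eq_zero, sub_eq_zero, Set.mem_insert_iff, Set.mem_singleton_iff]
    constructor
    · rintro ((h | h) | h)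
      · exact Or.inl h.symm
      · exact Or.inr (Or.inl h)
      · exact Or.inr (Or.inr h)
    · rintro (h | h | h)
      · exact Or.inl (Or.inl h.symm)
      · exact Or.inl (Or.inr h)
      · exact Or.inr h
  · -- complex spectrum: all eigenvalues real
    intro z hz
    rw [spec_iff_det] at hz
    have hrC : ((Real.sqrt (q / ψ₀ + Υ₁ * u ^ 2) : ℝ) : ℂ) ^ 2
        = ((q / ψ₀ + Υ₁ * u ^ 2 : ℝ) : ℂ) := by
      rw [← Complex.ofReal_pow, hr]
    have hdetC : ((Ms ψ₀ ψ₁ φ A u L a b q m₃₁).map (fun x : ℝ => (x : ℂ))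
          - z • (1 : Matrix (Fin 3) (Fin 3) ℂ)).det
        = ((φ * u : ℝ) - z) * (z - (lamP : ℝ)) * (z - (lamM : ℝ)) := by
      rw [hlamP, hlamM]
      simp only [Ms, Matrix.map_apply, Matrix.det_fin_three, Matrix.sub_apply,
        Matrix.smul_apply, Matrix.one_apply, Matrix.cons_val', Matrix.cons_val_zero,
        Matrix.cons_val_one, Matrix.head_cons, Matrix.head_fin_const, Matrix.empty_val',
        Matrix.cons_val_fin_one, Matrix.cons_val_two, Matrix.tail_cons,
        show (0:Fin 3) ≠ 1 by decide, show (0:Fin 3) ≠ 2 by decide,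
        show (1:Fin 3) ≠ 0 by decide, show (1:Fin 3) ≠ 2 by decide,
        show (2:Fin 3) ≠ 0 by decide, show (2:Fin 3) ≠ 1 by decide]
      norm_num
      push_cast
      linear_combination (((φ : ℂ) * u - z)) * (by push_cast [hΥ₁] ; ring :
          ((Υ₁ : ℝ) : ℂ) = (1 / (ψ₀:ℂ) ^ 2) * ((ψ₁:ℂ) - (A:ℂ) * a / 2) ^ 2
            + (1 / (ψ₀:ℂ)) * ((A:ℂ) * b - ψ₁)) * (u:ℂ) ^ 2
        + ((φ : ℂ) * u - z) * (by rw [hrC]; push_cast; ring :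
          ((Real.sqrt (q / ψ₀ + Υ₁ * u ^ 2) : ℝ) : ℂ) ^ 2
            = (q:ℂ) / ψ₀ + ((Υ₁ : ℝ) : ℂ) * (u:ℂ) ^ 2)
    rw [hdetC] at hz
    rcases mul_eq_zero.mp hz with h | h
    · rcases mul_eq_zero.mp h with h' | h'
      · have : z = ((φ * u : ℝ) : ℂ) := by linear_combination -h'
        rw [this]; exact Complex.ofReal_im _
      · have : z = ((lamP : ℝ) : ℂ) := sub_eq_zero.mp h'
        rw [this]; exact Complex.ofReal_im _
    · have : z = ((lamM : ℝ) : ℂ) := sub_eq_zero.mp h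
      rw [this]; exact Complex.ofReal_im _
end

section
/- Let q > 0, A_θ > 0, R₀ ≠ 0, and let ψ₁, ψ₂, φ, u be real numbers satisfying: (i) ψ₁ > 1; (ii) 20ψ₁² + φ(9ψ₂ + 5φ) − ψ₁(6 + 9ψ₂ + 19φ) > 0; (iii) 16ψ₁⁴ − ψ₂φ³ − 4ψ₁³(5 + 2ψ₂ + 4φ) + ψ₁φ(3ψ₂(φ − 3) + φ(φ − 5)) + ψ₁²(3 + φ(19 + 2φ) + ψ₂(9 + 6φ)) > 0; and (iv) −32ψ₁² − 27ψ₂² − 18ψ₂φ + φ² + 4ψ₁(−3 + 18ψ₂ + 4φ) > 0. Define, for real n_s, n_θ, the coefficients c₂ = (2ψ₁ + φ)un_s, c₁ = q(n_s² + (R₀²/A_θ)n_θ²) + (−ψ₁ − 2ψ₁φ)u²n_s², c₀ = (−q + ψ₁u²)φn_s³u + q(R₀²/A_θ)(ψ₂ − 2ψ₁)n_θ²un_s, and the discriminant Δ = −27c₀² − 18c₂c₁c₀ + 4c₁³ − 4c₂³c₀ + c₂²c₁². Then Δ ≥ 0 for all (n_s, n_θ) ∈ ℝ², and Δ > 0 whenever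 n_θ ≠ 0; consequently, for n_θ ≠ 0 the polynomial −λ³ + c₂λ² + c₁λ + c₀ (the characteristic polynomial of n_sM_s + n_θR₀M_θ) has three distinct real roots. -/
lemma cubic_large (p q M : ℝ) (h1 : 1 ≤ M) (h2 : 1 - p + q ^ 2 ≤ M) :
    0 < M ^ 3 + p * M + q := by
  have hB : 1 + q ^ 2 ≤ M ^ 2 + p := by nlinarith
  have hC : M * (1 + q ^ 2) ≤ M * (M ^ 2 + p) :=
    mul_le_mul_of_nonneg_left hB (by linarith)
  have hD : 1 + q ^ 2 ≤ M * (1 + q ^ 2) := by nlinarith [sq_nonneg q]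
  nlinarith [sq_nonneg (2 * q + 1)]

lemma depressed_three_roots (p q : ℝ) (hΔ' : 0 < -4 * p ^ 3 - 27 * q ^ 2) :
    ∃ x y z : ℝ, x < y ∧ y < z ∧
      x ^ 3 + p * x + q = 0 ∧ y ^ 3 + p * y + q = 0 ∧ z ^ 3 + p * z + q = 0 := by
  have hq2 : (0:ℝ) ≤ q ^ 2 := sq_nonneg q
  have hp : p < 0 := by
    by_contra h
    push_neg at h
    nlinarith [pow_nonneg h 3]
  have hs3 : 0 < -p / 3 := by linarith
  obtain ⟨s, hs, hs2⟩ : ∃ s : ℝ, 0 < s ∧ s ^ 2 = -p / 3 :=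
    ⟨Real.sqrt (-p / 3), Real.sqrt_pos.2 hs3, Real.sq_sqrt hs3.le⟩
  have hgm : (-s) ^ 3 + p * (-s) + q = q - 2 * p / 3 * s := by
    linear_combination (-s) * hs2
  have hgp : s ^ 3 + p * s + q = q + 2 * p / 3 * s := by
    linear_combination s * hs2
  have hprodval : (q - 2 * p / 3 * s) * (q + 2 * p / 3 * s) = q ^ 2 + 4 * p ^ 3 / 27 := by
    linear_combination (-(4 * p ^ 2 / 9)) * hs2
  have hprod : (q - 2 * p / 3 * s) * (q + 2 * p / 3 * s) < 0 := by
    rw [hprodval]; linarith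
  have hdiff : q + 2 * p / 3 * s < q - 2 * p / 3 * s := by
    nlinarith [mul_pos (neg_pos.2 hp) hs]
  have hgmpos : 0 < q - 2 * p / 3 * s := by
    by_contra h
    push_neg at h
    nlinarith
  have hgsneg : q + 2 * p / 3 * s < 0 := by nlinarith
  -- large bound M
  obtain ⟨M, hM1, hM2, hM2', hMgt⟩ :
      ∃ M : ℝ, 1 ≤ M ∧ 1 - p + q ^ 2 ≤ M ∧ 1 - p + (-q) ^ 2 ≤ M ∧ s < M :=
    ⟨1 + s - p + q ^ 2, by nlinarith, by nlinarith, by nlinarith, by nlinarith⟩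
  have hgM : 0 < M ^ 3 + p * M + q := cubic_large p q M hM1 hM2
  have hgM' : 0 < M ^ 3 + p * M + (-q) := cubic_large p (-q) M hM1 hM2'
  have hgmM : (-M) ^ 3 + p * (-M) + q < 0 := by nlinarith [hgM']
  have hc : Continuous fun t : ℝ => t ^ 3 + p * t + q := by fun_prop
  obtain ⟨x, hxmem, hgx⟩ :=
    intermediate_value_Icc (by linarith : -M ≤ -s) hc.continuousOn
      (show (0:ℝ) ∈ Set.Icc ((-M) ^ 3 + p * (-M) + q) ((-s) ^ 3 + p * (-s) + q) from
        ⟨hgmM.le, by linarith [hgm, hgmpos]⟩)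
  obtain ⟨y, hymem, hgy⟩ :=
    intermediate_value_Icc' (by linarith : -s ≤ s) hc.continuousOn
      (show (0:ℝ) ∈ Set.Icc (s ^ 3 + p * s + q) ((-s) ^ 3 + p * (-s) + q) from
        ⟨by linarith [hgp, hgsneg], by linarith [hgm, hgmpos]⟩)
  obtain ⟨z, hzmem, hgz⟩ :=
    intermediate_value_Icc (by linarith : s ≤ M) hc.continuousOn
      (show (0:ℝ) ∈ Set.Icc (s ^ 3 + p * s + q) (M ^ 3 + p * M + q) from
        ⟨by linarith [hgp, hgsneg], hgM.le⟩)
  have hgx' : x ^ 3 + p * x + q = 0 := hgx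
  have hgy' : y ^ 3 + p * y + q = 0 := hgy
  have hgz' : z ^ 3 + p * z + q = 0 := hgz
  have hx2 : x < -s := by
    rcases lt_or_eq_of_le hxmem.2 with h | h
    · exact h
    · exfalso; rw [h] at hgx'; linarith [hgm]
  have hy1 : -s < y := by
    rcases lt_or_eq_of_le hymem.1 with h | h
    · exact h
    · exfalso; rw [← h] at hgy'; linarith [hgm]
  have hy2 : y < s := by
    rcases lt_or_eq_of_le hymem.2 with h | h
    · exact h
    · exfalso; rw [h] at hgy'; linarith [hgp]
  have hz1 : s < z := by
    rcases lt_or_eq_of_le hzmem.1 with h | h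
    · exact h
    · exfalso; rw [← h] at hgz'; linarith [hgp]
  exact ⟨x, y, z, by linarith, by linarith, hgx', hgy', hgz'⟩

lemma cubic_three_roots (c₂ c₁ c₀ : ℝ)
    (hΔ : 0 < -27 * c₀ ^ 2 - 18 * c₂ * c₁ * c₀ + 4 * c₁ ^ 3 - 4 * c₂ ^ 3 * c₀
          + c₂ ^ 2 * c₁ ^ 2) :
    ∃ x y z : ℝ, x ≠ y ∧ x ≠ z ∧ y ≠ z ∧
      ∀ lam : ℝ, -lam ^ 3 + c₂ * lam ^ 2 + c₁ * lam + c₀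
        = -((lam - x) * (lam - y) * (lam - z)) := by
  obtain ⟨x, y, z, hxy, hyz, hgx, hgy, hgz⟩ :=
    depressed_three_roots (-c₁ - c₂ ^ 2 / 3) (-c₀ - c₁ * c₂ / 3 - 2 * c₂ ^ 3 / 27)
      (by nlinarith)
  obtain ⟨X, hXdef⟩ : ∃ X : ℝ, X = x + c₂ / 3 := ⟨_, rfl⟩
  obtain ⟨Y, hYdef⟩ : ∃ Y : ℝ, Y = y + c₂ / 3 := ⟨_, rfl⟩
  obtain ⟨Z, hZdef⟩ : ∃ Z : ℝ, Z = z + c₂ / 3 := ⟨_, rfl⟩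
  have hfx : X ^ 3 - c₂ * X ^ 2 - c₁ * X - c₀ = 0 := by
    rw [hXdef]; linear_combination hgx
  have hfy : Y ^ 3 - c₂ * Y ^ 2 - c₁ * Y - c₀ = 0 := by
    rw [hYdef]; linear_combination hgy
  have hfz : Z ^ 3 - c₂ * Z ^ 2 - c₁ * Z - c₀ = 0 := by
    rw [hZdef]; linear_combination hgz
  have hXY : X - Y ≠ 0 := by rw [hXdef, hYdef]; intro h; nlinarith
  have hXZ : X - Z ≠ 0 := by rw [hXdef, hZdef]; intro h; nlinarith
  have hYZ : Y - Z ≠ 0 := by rw [hYdef, hZdef]; intro h; nlinarith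
  have hA : X ^ 2 + X * Y + Y ^ 2 - c₂ * (X + Y) - c₁ = 0 := by
    have h : (X - Y) * (X ^ 2 + X * Y + Y ^ 2 - c₂ * (X + Y) - c₁) = 0 := by
      linear_combination hfx - hfy
    exact (mul_eq_zero.1 h).resolve_left hXY
  have hB : X ^ 2 + X * Z + Z ^ 2 - c₂ * (X + Z) - c₁ = 0 := by
    have h : (X - Z) * (X ^ 2 + X * Z + Z ^ 2 - c₂ * (X + Z) - c₁) = 0 := by
      linear_combination hfx - hfz
    exact (mul_eq_zero.1 h).resolve_left hXZ
  have he1 : X + Y + Z = c₂ := by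
    have h : (Y - Z) * (X + Y + Z - c₂) = 0 := by linear_combination hA - hB
    have := (mul_eq_zero.1 h).resolve_left hYZ
    linarith
  have he2 : X * Y + Y * Z + Z * X = -c₁ := by
    linear_combination -hA + (X + Y) * he1
  have he3 : X * Y * Z = c₀ := by
    linear_combination hfx - X ^ 2 * he1 + X * he2
  refine ⟨X, Y, Z, sub_ne_zero.1 hXY, sub_ne_zero.1 hXZ, sub_ne_zero.1 hYZ, fun lam => ?_⟩
  linear_combination -lam ^ 2 * he1 + lam * he2 - he3
lemma disc_key (ψ₁ ψ₂ φ a P B c₂ c₁ c₀ : ℝ)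
    (h1 : 1 < ψ₁)
    (h2 : 0 < 20 * ψ₁ ^ 2 + φ * (9 * ψ₂ + 5 * φ) - ψ₁ * (6 + 9 * ψ₂ + 19 * φ))
    (h3 : 0 < 16 * ψ₁ ^ 4 - ψ₂ * φ ^ 3 - 4 * ψ₁ ^ 3 * (5 + 2 * ψ₂ + 4 * φ)
        + ψ₁ * φ * (3 * ψ₂ * (φ - 3) + φ * (φ - 5))
        + ψ₁ ^ 2 * (3 + φ * (19 + 2 * φ) + ψ₂ * (9 + 6 * φ)))
    (h4 : 0 < -32 * ψ₁ ^ 2 - 27 * ψ₂ ^ 2 - 18 * ψ₂ * φ + φ ^ 2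
        + 4 * ψ₁ * (-3 + 18 * ψ₂ + 4 * φ))
    (hP : 0 ≤ P) (hB : 0 ≤ B)
    (hc₂ : c₂ = (2 * ψ₁ + φ) * a)
    (hc₁ : c₁ = P + B - (ψ₁ + 2 * ψ₁ * φ) * a ^ 2)
    (hc₀ : c₀ = -(φ * a * P) + ψ₁ * φ * a ^ 3 + (ψ₂ - 2 * ψ₁) * a * B) :
    4 * B ^ 3 ≤ -27 * c₀ ^ 2 - 18 * c₂ * c₁ * c₀ + 4 * c₁ ^ 3 - 4 * c₂ ^ 3 * c₀
      + c₂ ^ 2 * c₁ ^ 2 := by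
  subst hc₂ hc₁ hc₀
  have ha2 : 0 ≤ a ^ 2 := sq_nonneg a
  have hE : 0 ≤ (ψ₁ ^ 2 - ψ₁) * a ^ 2 + P := by
    nlinarith [mul_nonneg (by nlinarith : (0:ℝ) ≤ ψ₁ ^ 2 - ψ₁) ha2]
  have hF : 0 ≤ ((φ ^ 2 - 2 * ψ₁ * φ + ψ₁) * a ^ 2 - P) ^ 2 := sq_nonneg _
  have hG1 : 0 ≤ 12 * P ^ 2
      + 4 * (20 * ψ₁ ^ 2 + φ * (9 * ψ₂ + 5 * φ) - ψ₁ * (6 + 9 * ψ₂ + 19 * φ)) * a ^ 2 * P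
      + 4 * (16 * ψ₁ ^ 4 - ψ₂ * φ ^ 3 - 4 * ψ₁ ^ 3 * (5 + 2 * ψ₂ + 4 * φ)
        + ψ₁ * φ * (3 * ψ₂ * (φ - 3) + φ * (φ - 5))
        + ψ₁ ^ 2 * (3 + φ * (19 + 2 * φ) + ψ₂ * (9 + 6 * φ))) * a ^ 4 := by
    have := mul_nonneg (mul_nonneg (by linarith : (0:ℝ) ≤ 4 * (20 * ψ₁ ^ 2 + φ * (9 * ψ₂ + 5 * φ) - ψ₁ * (6 + 9 * ψ₂ + 19 * φ))) ha2) hP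
    nlinarith [mul_nonneg ha2 ha2, sq_nonneg P]
  have hG2 : 0 ≤ 12 * P
      + (-32 * ψ₁ ^ 2 - 27 * ψ₂ ^ 2 - 18 * ψ₂ * φ + φ ^ 2
        + 4 * ψ₁ * (-3 + 18 * ψ₂ + 4 * φ)) * a ^ 2 := by nlinarith
  have hEF := mul_nonneg hE hF
  have hBG1 := mul_nonneg hB hG1
  have hB2G2 := mul_nonneg (mul_nonneg hB hB) hG2
  have hid : -27 * (-(φ * a * P) + ψ₁ * φ * a ^ 3 + (ψ₂ - 2 * ψ₁) * a * B) ^ 2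
      - 18 * ((2 * ψ₁ + φ) * a) * (P + B - (ψ₁ + 2 * ψ₁ * φ) * a ^ 2)
        * (-(φ * a * P) + ψ₁ * φ * a ^ 3 + (ψ₂ - 2 * ψ₁) * a * B)
      + 4 * (P + B - (ψ₁ + 2 * ψ₁ * φ) * a ^ 2) ^ 3
      - 4 * ((2 * ψ₁ + φ) * a) ^ 3 * (-(φ * a * P) + ψ₁ * φ * a ^ 3 + (ψ₂ - 2 * ψ₁) * a * B)
      + ((2 * ψ₁ + φ) * a) ^ 2 * (P + B - (ψ₁ + 2 * ψ₁ * φ) * a ^ 2) ^ 2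
      = 4 * ((ψ₁ ^ 2 - ψ₁) * a ^ 2 + P) * (((φ ^ 2 - 2 * ψ₁ * φ + ψ₁) * a ^ 2 - P) ^ 2)
        + B * (12 * P ^ 2
          + 4 * (20 * ψ₁ ^ 2 + φ * (9 * ψ₂ + 5 * φ) - ψ₁ * (6 + 9 * ψ₂ + 19 * φ)) * a ^ 2 * P
          + 4 * (16 * ψ₁ ^ 4 - ψ₂ * φ ^ 3 - 4 * ψ₁ ^ 3 * (5 + 2 * ψ₂ + 4 * φ)
            + ψ₁ * φ * (3 * ψ₂ * (φ - 3) + φ * (φ - 5))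
            + ψ₁ ^ 2 * (3 + φ * (19 + 2 * φ) + ψ₂ * (9 + 6 * φ))) * a ^ 4)
        + B * B * (12 * P
          + (-32 * ψ₁ ^ 2 - 27 * ψ₂ ^ 2 - 18 * ψ₂ * φ + φ ^ 2
            + 4 * ψ₁ * (-3 + 18 * ψ₂ + 4 * φ)) * a ^ 2)
        + 4 * B ^ 3 := by ring
  rw [hid]
  linarith [hEF, hBG1, hB2G2]

theorem stmt7 (q Aθ R₀ ψ₁ ψ₂ φ u : ℝ)
    (hq : 0 < q) (hAθ : 0 < Aθ) (hR₀ : R₀ ≠ 0)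
    (h1 : 1 < ψ₁)
    (h2 : 0 < 20 * ψ₁ ^ 2 + φ * (9 * ψ₂ + 5 * φ) - ψ₁ * (6 + 9 * ψ₂ + 19 * φ))
    (h3 : 0 < 16 * ψ₁ ^ 4 - ψ₂ * φ ^ 3 - 4 * ψ₁ ^ 3 * (5 + 2 * ψ₂ + 4 * φ)
        + ψ₁ * φ * (3 * ψ₂ * (φ - 3) + φ * (φ - 5))
        + ψ₁ ^ 2 * (3 + φ * (19 + 2 * φ) + ψ₂ * (9 + 6 * φ)))
    (h4 : 0 < -32 * ψ₁ ^ 2 - 27 * ψ₂ ^ 2 - 18 * ψ₂ * φ + φ ^ 2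
        + 4 * ψ₁ * (-3 + 18 * ψ₂ + 4 * φ)) :
    ∀ nₛ nθ : ℝ,
      let c₂ := (2 * ψ₁ + φ) * u * nₛ
      let c₁ := q * (nₛ ^ 2 + R₀ ^ 2 / Aθ * nθ ^ 2) + (-ψ₁ - 2 * ψ₁ * φ) * u ^ 2 * nₛ ^ 2
      let c₀ := (-q + ψ₁ * u ^ 2) * φ * nₛ ^ 3 * u
          + q * (R₀ ^ 2 / Aθ) * (ψ₂ - 2 * ψ₁) * nθ ^ 2 * u * nₛ
      let Δ := -27 * c₀ ^ 2 - 18 * c₂ * c₁ * c₀ + 4 * c₁ ^ 3 - 4 * c₂ ^ 3 * c₀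
          + c₂ ^ 2 * c₁ ^ 2
      0 ≤ Δ ∧
      (nθ ≠ 0 → 0 < Δ ∧
        ∃ x y z : ℝ, x ≠ y ∧ x ≠ z ∧ y ≠ z ∧
          ∀ lam : ℝ, -lam ^ 3 + c₂ * lam ^ 2 + c₁ * lam + c₀
            = -((lam - x) * (lam - y) * (lam - z))) := by
  intro nₛ nθ
  have hB0 : 0 ≤ q * R₀ ^ 2 / Aθ * nθ ^ 2 := by positivity
  have hkey := disc_key ψ₁ ψ₂ φ (u * nₛ) (q * nₛ ^ 2) (q * R₀ ^ 2 / Aθ * nθ ^ 2)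
    ((2 * ψ₁ + φ) * u * nₛ)
    (q * (nₛ ^ 2 + R₀ ^ 2 / Aθ * nθ ^ 2) + (-ψ₁ - 2 * ψ₁ * φ) * u ^ 2 * nₛ ^ 2)
    ((-q + ψ₁ * u ^ 2) * φ * nₛ ^ 3 * u
      + q * (R₀ ^ 2 / Aθ) * (ψ₂ - 2 * ψ₁) * nθ ^ 2 * u * nₛ)
    h1 h2 h3 h4 (by positivity) hB0 (by ring) (by ring) (by ring)
  refine ⟨le_trans (by positivity) hkey, fun hnθ => ?_⟩
  have hθ2 : 0 < nθ ^ 2 := pow_two_pos_of_ne_zero hnθ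
  have hR2 : 0 < R₀ ^ 2 := pow_two_pos_of_ne_zero hR₀
  have hBpos : 0 < q * R₀ ^ 2 / Aθ * nθ ^ 2 :=
    mul_pos (div_pos (mul_pos hq hR2) hAθ) hθ2
  have hΔpos := lt_of_lt_of_le
    (mul_pos (by norm_num : (0:ℝ) < 4) (pow_pos hBpos 3)) hkey
  exact ⟨hΔpos, cubic_three_roots _ _ _ hΔpos⟩
end

section
/- Let β > 0 and let G₀ = G₀(s) > 0 and A₀ = A₀(s) > 0 be differentiable functions. For A > 0 define p(A, s) = G₀(s)·((A/A₀(s))^{β/2} − 1), p̂(A, s) = (β/(β+2))·p(A,s) − (β/(β+2))·G₀(s)·(A₀(s) − A)/A, and p̄ = p − p̂. Then for every A > 0 and every s, the partial derivative of p̄ with respect to s at fixed A satisfies ∂₂p̄(A, s) = (p̄(A,s)/G₀(s))·G₀'(s) − (p̂(A,s)/A₀(s))·A₀'(s). -/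
theorem stmt10 (β : ℝ) (hβ : 0 < β)
    (G₀ A₀ : ℝ → ℝ)
    (hG₀ : Differentiable ℝ G₀) (hA₀ : Differentiable ℝ A₀)
    (hG₀pos : ∀ s, 0 < G₀ s) (hA₀pos : ∀ s, 0 < A₀ s) :
    let p : ℝ → ℝ → ℝ := fun A s => G₀ s * ((A / A₀ s) ^ (β / 2) - 1)
    let phat : ℝ → ℝ → ℝ := fun A s =>
      β / (β + 2) * p A s - β / (β + 2) * G₀ s * (A₀ s - A) / A
    let pbar : ℝ → ℝ → ℝ := fun A s => p A s - phat A s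
    ∀ A : ℝ, 0 < A → ∀ s : ℝ,
      deriv (fun s' => pbar A s') s
        = pbar A s / G₀ s * deriv G₀ s - phat A s / A₀ s * deriv A₀ s := by
  intro p phat pbar A hA s
  have hA0 : A₀ s ≠ 0 := (hA₀pos s).ne'
  have hG0 : G₀ s ≠ 0 := (hG₀pos s).ne'
  have hAne : A ≠ 0 := hA.ne'
  have hx : A / A₀ s ≠ 0 := div_ne_zero hAne hA0
  -- derivative of s ↦ A / A₀ s
  have hdiv : HasDerivAt (fun s' => A / A₀ s')
      ((0 * A₀ s - A * deriv A₀ s) / (A₀ s) ^ 2) s :=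
    (hasDerivAt_const s A).div (hA₀ s).hasDerivAt hA0
  have hpow : HasDerivAt (fun s' => (A / A₀ s') ^ (β / 2))
      (β / 2 * (A / A₀ s) ^ (β / 2 - 1) *
        ((0 * A₀ s - A * deriv A₀ s) / (A₀ s) ^ 2)) s := by
    have := hdiv.rpow_const (p := β / 2) (Or.inl hx)
    simpa [mul_comm, mul_assoc, mul_left_comm] using this
  have hp : HasDerivAt (fun s' => p A s')
      (deriv G₀ s * ((A / A₀ s) ^ (β / 2) - 1) +
        G₀ s * (β / 2 * (A / A₀ s) ^ (β / 2 - 1) *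
          ((0 * A₀ s - A * deriv A₀ s) / (A₀ s) ^ 2))) s :=
    (hG₀ s).hasDerivAt.mul (hpow.sub_const 1)
  have hrest := (((((hG₀ s).hasDerivAt.const_mul (β / (β + 2))).mul
      ((hA₀ s).hasDerivAt.sub_const A))).div_const A)
  have hphat : HasDerivAt (fun s' => phat A s') _ s :=
    (hp.const_mul (β / (β + 2))).sub hrest
  have hpbar : HasDerivAt (fun s' => pbar A s') _ s := hp.sub hphat
  rw [hpbar.deriv]
  -- key rpow identity
  have hkey : (A / A₀ s) ^ (β / 2 - 1) = (A / A₀ s) ^ (β / 2) / (A / A₀ s) := by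
    rw [Real.rpow_sub_one hx]
  simp only [phat, pbar, p, hkey]
  have hβ2 : β + 2 ≠ 0 := by positivity
  field_simp
  ring
end

section
/- Fix Δs, Δθ, Δt > 0 and a rectangular grid of cells indexed by (j,k). At each s-interface (j+1/2, k) suppose given real numbers A^−, A^+ ≥ 0, u^−, u^+, and local speeds a⁺ ≥ max{u^−, u^+, 0} and a⁻ ≤ min{u^−, u^+, 0} with a⁺ > a⁻, and define the first-component flux H^F = (a⁺A^−u^− − a⁻A^+u^+)/(a⁺ − a⁻) + a⁺a⁻(A^+ − A^−)/(a⁺ − a⁻); analogously at each θ-interface (j, k+1/2) with values A^±, ω^±, speeds b⁺ ≥ max{ω^−, ω^+, 0}, b⁻ ≤ min{ω^−, ω^+, 0} with b⁺ > b⁻, and flux H^G. Suppose each cell average satisfies Ā_{j,k} = (1/4)·(A^+_{j−1/2,k} + A^−_{j+1/2,k} + A^−_{j,k+1/2} + A^+_{j,k−1/2}), and the CFL condition Δt ≤ (1/4)·min{Δs/a, Δθ/b} holds, where a = max over s-interfaces of max(a⁺, −a⁻) and b = max over θ-interfaces of max(b⁺, −b⁻). Then the forward-Euler update Ā_{j,k}(t+Δt)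 = Ā_{j,k} − (Δt/Δs)·(H^F_{j+1/2,k} − H^F_{j−1/2,k}) − (Δt/Δθ)·(H^G_{j,k+1/2} − H^G_{j,k−1/2}) satisfies Ā_{j,k}(t+Δt) ≥ 0 for all (j,k). Consequently, any convex combination of such Euler steps (in particular the second-order SSP Runge–Kutta method) preserves nonnegativity of the cell averages of A. -/

lemma flux_le (AM AP uM uP p m a : ℝ) (hAM : 0 ≤ AM) (hAP : 0 ≤ AP)
    (huMp : uM ≤ p) (huPp : uP ≤ p) (hp : 0 ≤ p)
    (hmuM : m ≤ uM) (hmuP : m ≤ uP) (hm : m ≤ 0)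
    (hgap : m < p) (hpa : p ≤ a) (hma : -m ≤ a) :
    (p * (AM * uM) - m * (AP * uP)) / (p - m) + p * m * (AP - AM) / (p - m) ≤ a * AM := by
  have hd : 0 < p - m := by linarith
  rw [← add_div, div_le_iff₀ hd]
  nlinarith [mul_nonneg hAM (mul_nonneg hp (by linarith : (0:ℝ) ≤ a - uM)),
    mul_nonneg hAM (mul_nonneg (by linarith : (0:ℝ) ≤ -m) (by linarith : (0:ℝ) ≤ a - p)),
    mul_nonneg hAP (mul_nonneg (by linarith : (0:ℝ) ≤ -m) (by linarith : (0:ℝ) ≤ p - uP))]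

lemma flux_ge (AM AP uM uP p m a : ℝ) (hAM : 0 ≤ AM) (hAP : 0 ≤ AP)
    (huMp : uM ≤ p) (huPp : uP ≤ p) (hp : 0 ≤ p)
    (hmuM : m ≤ uM) (hmuP : m ≤ uP) (hm : m ≤ 0)
    (hgap : m < p) (hpa : p ≤ a) (hma : -m ≤ a) :
    -(a * AP) ≤ (p * (AM * uM) - m * (AP * uP)) / (p - m) + p * m * (AP - AM) / (p - m) := by
  have hd : 0 < p - m := by linarith
  rw [← add_div, le_div_iff₀ hd]
  nlinarith [mul_nonneg hAM (mul_nonneg hp (by linarith : (0:ℝ) ≤ uM - m)),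
    mul_nonneg hAP (mul_nonneg (by linarith : (0:ℝ) ≤ -m) (by linarith : (0:ℝ) ≤ uP + a)),
    mul_nonneg hAP (mul_nonneg hp (by linarith : (0:ℝ) ≤ a + m))]

lemma step_le (lam A H a : ℝ) (hlam : 0 ≤ lam) (hA : 0 ≤ A) (hla : lam * a ≤ 1/4)
    (hH : H ≤ a * A) : lam * H ≤ A / 4 := by
  nlinarith [mul_le_mul_of_nonneg_left hH hlam, mul_le_mul_of_nonneg_right hla hA]

lemma step_ge (lam A H a : ℝ) (hlam : 0 ≤ lam) (hA : 0 ≤ A) (hla : lam * a ≤ 1/4)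
    (hH : -(a * A) ≤ H) : -(A / 4) ≤ lam * H := by
  nlinarith [mul_le_mul_of_nonneg_left hH hlam, mul_le_mul_of_nonneg_right hla hA]

/-- **Positivity-preserving property** (Proposition 4.2): under the CFL condition, the
forward-Euler update of the first component (the cell averages of `A`) of the
central-upwind scheme stays nonnegative; consequently every convex combination of such
Euler updates with the old nonnegative averages (in particular the second-order SSP
Runge–Kutta step) stays nonnegative as well. -/
theorem stmt13 (Δs Δθ Δt : ℝ) (hΔs : 0 < Δs) (hΔθ : 0 < Δθ) (hΔt : 0 < Δt)
    -- reconstructed data at the s-interfaces (j+1/2,k)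
    (AsM AsP usM usP ap am : ℤ → ℤ → ℝ)
    -- reconstructed data at the θ-interfaces (j,k+1/2)
    (AθM AθP ωM ωP bp bm : ℤ → ℤ → ℝ)
    (hAsM : ∀ j k, 0 ≤ AsM j k) (hAsP : ∀ j k, 0 ≤ AsP j k)
    (hAθM : ∀ j k, 0 ≤ AθM j k) (hAθP : ∀ j k, 0 ≤ AθP j k)
    -- a⁺ ≥ max{u⁻, u⁺, 0},  a⁻ ≤ min{u⁻, u⁺, 0},  a⁺ > a⁻
    (hap : ∀ j k, usM j k ≤ ap j k ∧ usP j k ≤ ap j k ∧ 0 ≤ ap j k)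
    (ham : ∀ j k, am j k ≤ usM j k ∧ am j k ≤ usP j k ∧ am j k ≤ 0)
    (hagap : ∀ j k, am j k < ap j k)
    (hbp : ∀ j k, ωM j k ≤ bp j k ∧ ωP j k ≤ bp j k ∧ 0 ≤ bp j k)
    (hbm : ∀ j k, bm j k ≤ ωM j k ∧ bm j k ≤ ωP j k ∧ bm j k ≤ 0)
    (hbgap : ∀ j k, bm j k < bp j k)
    (Abar : ℤ → ℤ → ℝ)
    -- cell-average relation enforced by the corrected reconstruction
    (havg : ∀ j k, Abar j k
      = (AsP (j - 1) k + AsM j k + AθM j k + AθP j (k - 1)) / 4)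
    (a b : ℝ) (ha : 0 < a) (hb : 0 < b)
    (haBd : ∀ j k, ap j k ≤ a ∧ -am j k ≤ a)
    (hbBd : ∀ j k, bp j k ≤ b ∧ -bm j k ≤ b)
    (hCFL : Δt ≤ 1 / 4 * min (Δs / a) (Δθ / b)) :
    let HF : ℤ → ℤ → ℝ := fun j k =>
      (ap j k * (AsM j k * usM j k) - am j k * (AsP j k * usP j k)) / (ap j k - am j k)
        + ap j k * am j k * (AsP j k - AsM j k) / (ap j k - am j k)
    let HG : ℤ → ℤ → ℝ := fun j k =>
      (bp j k * (AθM j k * ωM j k) - bm j k * (AθP j k * ωP j k)) / (bp j k - bm j k)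
        + bp j k * bm j k * (AθP j k - AθM j k) / (bp j k - bm j k)
    let Anew : ℤ → ℤ → ℝ := fun j k =>
      Abar j k - Δt / Δs * (HF j k - HF (j - 1) k) - Δt / Δθ * (HG j k - HG j (k - 1))
    (∀ j k, 0 ≤ Anew j k) ∧
    (∀ μ : ℝ, 0 ≤ μ → μ ≤ 1 → ∀ j k, 0 ≤ μ * Abar j k + (1 - μ) * Anew j k) := by

  intro HF HG Anew
  have hamin : a ≤ max a b := le_max_left a b
  -- CFL consequences
  have hta : Δt / Δs * a ≤ 1 / 4 := by
    have h1 : Δt ≤ 1 / 4 * (Δs / a) := le_trans hCFL (by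
      gcongr; exact min_le_left _ _)
    rw [div_mul_eq_mul_div, div_le_iff₀ hΔs]
    calc Δt * a ≤ 1 / 4 * (Δs / a) * a := by nlinarith
      _ = 1 / 4 * Δs := by field_simp
  have htb : Δt / Δθ * b ≤ 1 / 4 := by
    have h1 : Δt ≤ 1 / 4 * (Δθ / b) := le_trans hCFL (by
      gcongr; exact min_le_right _ _)
    rw [div_mul_eq_mul_div, div_le_iff₀ hΔθ]
    calc Δt * b ≤ 1 / 4 * (Δθ / b) * b := by nlinarith
      _ = 1 / 4 * Δθ := by field_simp
  have hls : 0 ≤ Δt / Δs := le_of_lt (div_pos hΔt hΔs)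
  have hlθ : 0 ≤ Δt / Δθ := le_of_lt (div_pos hΔt hΔθ)
  have hHFle : ∀ j k, HF j k ≤ a * AsM j k := fun j k =>
    flux_le _ _ _ _ _ _ _ (hAsM j k) (hAsP j k) (hap j k).1 (hap j k).2.1 (hap j k).2.2
      (ham j k).1 (ham j k).2.1 (ham j k).2.2 (hagap j k) (haBd j k).1 (haBd j k).2
  have hHFge : ∀ j k, -(a * AsP j k) ≤ HF j k := fun j k =>
    flux_ge _ _ _ _ _ _ _ (hAsM j k) (hAsP j k) (hap j k).1 (hap j k).2.1 (hap j k).2.2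
      (ham j k).1 (ham j k).2.1 (ham j k).2.2 (hagap j k) (haBd j k).1 (haBd j k).2
  have hHGle : ∀ j k, HG j k ≤ b * AθM j k := fun j k =>
    flux_le _ _ _ _ _ _ _ (hAθM j k) (hAθP j k) (hbp j k).1 (hbp j k).2.1 (hbp j k).2.2
      (hbm j k).1 (hbm j k).2.1 (hbm j k).2.2 (hbgap j k) (hbBd j k).1 (hbBd j k).2
  have hHGge : ∀ j k, -(b * AθP j k) ≤ HG j k := fun j k =>
    flux_ge _ _ _ _ _ _ _ (hAθM j k) (hAθP j k) (hbp j k).1 (hbp j k).2.1 (hbp j k).2.2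
      (hbm j k).1 (hbm j k).2.1 (hbm j k).2.2 (hbgap j k) (hbBd j k).1 (hbBd j k).2
  have hAnew : ∀ j k, 0 ≤ Anew j k := by
    intro j k
    have f1 : Δt / Δs * HF j k ≤ AsM j k / 4 :=
      step_le _ _ _ _ hls (hAsM j k) hta (hHFle j k)
    have f2 : -(AsP (j - 1) k / 4) ≤ Δt / Δs * HF (j - 1) k :=
      step_ge _ _ _ _ hls (hAsP (j - 1) k) hta (hHFge (j - 1) k)
    have f3 : Δt / Δθ * HG j k ≤ AθM j k / 4 :=
      step_le _ _ _ _ hlθ (hAθM j k) htb (hHGle j k)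
    have f4 : -(AθP j (k - 1) / 4) ≤ Δt / Δθ * HG j (k - 1) :=
      step_ge _ _ _ _ hlθ (hAθP j (k - 1)) htb (hHGge j (k - 1))
    have hA := havg j k
    show 0 ≤ Abar j k - Δt / Δs * (HF j k - HF (j - 1) k)
        - Δt / Δθ * (HG j k - HG j (k - 1))
    have e1 : Δt / Δs * (HF j k - HF (j - 1) k)
        = Δt / Δs * HF j k - Δt / Δs * HF (j - 1) k := by ring
    have e2 : Δt / Δθ * (HG j k - HG j (k - 1))
        = Δt / Δθ * HG j k - Δt / Δθ * HG j (k - 1) := by ring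
    rw [e1, e2, hA]
    linarith
  refine ⟨hAnew, fun μ hμ0 hμ1 j k => add_nonneg (mul_nonneg hμ0 ?_)
    (mul_nonneg (by linarith) (hAnew j k))⟩
  rw [havg j k]
  have := hAsP (j - 1) k; have := hAsM j k; have := hAθM j k; have := hAθP j (k - 1)
  linarith
end

section
/- Let γ > 0, R > 0 and Γ ∈ ℝ. Define, for 0 ≤ r ≤ R, the Jacobian factor |J|(r) = r·(1 − (r/R)·Γ), the area A = ∫₀^R |J|(r) dr = R²·(1/2 − Γ/3), the axial profile W(r) = 1 − (r/R)^γ (so that V_s* = (r/|J|)·W and V_s*·|J| = r·W), and e_s = A / ∫₀^R r·W(r) dr. Suppose A ≠ 0. Then ψ_{s,o} := (e_s/A)·∫₀^R (|J|(r)/r)²·|J|(r)·V_s*(r) dr = (e_s/A)·∫₀^R (1 − (r/R)Γ)²·r·W(r) dr equals 1 − (4(γ+2)/(3(γ+3)))·Γ + ((γ+2)/(2(γ+4)))·Γ². -/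
open intervalIntegral Real

lemma cont_rpow' (γ : ℝ) (hγ : 0 < γ) : Continuous (fun r : ℝ => r ^ γ) := by
  rw [continuous_iff_continuousAt]
  intro x
  exact Real.continuousAt_rpow_const x γ (Or.inr hγ.le)

lemma int_pow_rpow (γ R : ℝ) (hγ : 0 < γ) (hR : 0 < R) (k : ℕ) (hk : 0 < k) :
    ∫ r in (0:ℝ)..R, r ^ k * (r / R) ^ γ = R ^ (k+1) / (γ + k + 1) := by
  have hRγ : (0:ℝ) < R ^ γ := Real.rpow_pos_of_pos hR γ
  have hexp : (0:ℝ) < γ + k := by positivity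
  have h1 : ∫ r in (0:ℝ)..R, r ^ k * (r / R) ^ γ
      = ∫ r in (0:ℝ)..R, (R ^ γ)⁻¹ * r ^ (γ + (k:ℝ)) := by
    apply intervalIntegral.integral_congr
    intro r hr
    rw [Set.uIcc_of_le hR.le] at hr
    obtain ⟨hr0, _⟩ := hr
    show r ^ k * (r / R) ^ γ = (R ^ γ)⁻¹ * r ^ (γ + (k:ℝ))
    rcases eq_or_lt_of_le hr0 with h | h
    · simp only [← h]
      rw [Real.zero_rpow hexp.ne', zero_pow hk.ne']
      ring
    · rw [Real.div_rpow h.le hR.le, ← Real.rpow_natCast r k,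
        Real.rpow_add h γ k]
      ring
  rw [h1, intervalIntegral.integral_const_mul, integral_rpow (Or.inl (by linarith))]
  rw [Real.zero_rpow (by positivity)]
  have hsplit : R ^ (γ + (k:ℝ) + 1) = R ^ γ * R ^ (k+1) := by
    rw [← Real.rpow_natCast R (k+1)]
    push_cast
    rw [← Real.rpow_add hR]
    ring_nf
  rw [hsplit]
  field_simp
  ring

/-- For the Hagen–Poiseuille axial profile, the Coriolis factor
`ψ_{s,o} = (e_s/A)·∫₀^R (1 − (r/R)Γ)²·r·W(r) dr` is the explicit quadratic
`1 − (4(γ+2)/(3(γ+3)))Γ + ((γ+2)/(2(γ+4)))Γ²` of the curvature parameter `Γ`. -/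
theorem stmt16 (γ R Γ : ℝ) (hγ : 0 < γ) (hR : 0 < R)
    (hA : R ^ 2 * (1 / 2 - Γ / 3) ≠ 0) :
    let A := R ^ 2 * (1 / 2 - Γ / 3)
    let W : ℝ → ℝ := fun r => 1 - (r / R) ^ γ
    let es := A / ∫ r in (0:ℝ)..R, r * W r
    (∫ r in (0:ℝ)..R, r * (1 - r / R * Γ)) = A ∧
    es / A * ∫ r in (0:ℝ)..R, (1 - r / R * Γ) ^ 2 * (r * W r)
      = 1 - 4 * (γ + 2) / (3 * (γ + 3)) * Γ + (γ + 2) / (2 * (γ + 4)) * Γ ^ 2 := by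
  intro A W es
  have hRne : R ≠ 0 := hR.ne'
  have hg : Continuous fun r : ℝ => (r / R) ^ γ :=
    (cont_rpow' γ hγ).comp (continuous_id.div_const R)
  have h2 : γ + 2 ≠ 0 := by positivity
  have h3 : γ + 3 ≠ 0 := by positivity
  have h4 : γ + 4 ≠ 0 := by positivity
  -- basic polynomial integrals
  have ip1 : ∫ r in (0:ℝ)..R, r = R ^ 2 / 2 := by
    rw [integral_id]; ring
  have ip2 : ∫ r in (0:ℝ)..R, r ^ 2 = R ^ 3 / 3 := by
    rw [integral_pow]; norm_num
  have ip3 : ∫ r in (0:ℝ)..R, r ^ 3 = R ^ 4 / 4 := by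
    rw [integral_pow]; norm_num
  -- rpow integrals
  have i1 : ∫ r in (0:ℝ)..R, r * (r / R) ^ γ = R ^ 2 / (γ + 2) := by
    have h := int_pow_rpow γ R hγ hR 1 one_pos
    simp only [pow_one, Nat.cast_one] at h
    rw [show γ + 1 + 1 = γ + 2 by ring] at h
    exact h
  have i2 : ∫ r in (0:ℝ)..R, r ^ 2 * (r / R) ^ γ = R ^ 3 / (γ + 3) := by
    have h := int_pow_rpow γ R hγ hR 2 two_pos
    norm_num at h
    rw [show γ + 2 + 1 = γ + 3 by ring] at h
    exact h
  have i3 : ∫ r in (0:ℝ)..R, r ^ 3 * (r / R) ^ γ = R ^ 4 / (γ + 4) := by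
    have h := int_pow_rpow γ R hγ hR 3 three_pos
    norm_num at h
    rw [show γ + 3 + 1 = γ + 4 by ring] at h
    exact h
  -- integrability
  have c1 : IntervalIntegrable (fun r : ℝ => r * (r / R) ^ γ) MeasureTheory.volume 0 R :=
    (continuous_id.mul hg).intervalIntegrable 0 R
  have c2 : IntervalIntegrable (fun r : ℝ => r ^ 2 * (r / R) ^ γ) MeasureTheory.volume 0 R :=
    ((continuous_pow 2).mul hg).intervalIntegrable 0 R
  have c3 : IntervalIntegrable (fun r : ℝ => r ^ 3 * (r / R) ^ γ) MeasureTheory.volume 0 R :=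
    ((continuous_pow 3).mul hg).intervalIntegrable 0 R
  have cp1 : IntervalIntegrable (fun r : ℝ => r) MeasureTheory.volume 0 R :=
    continuous_id.intervalIntegrable 0 R
  have cp2 : IntervalIntegrable (fun r : ℝ => r ^ 2) MeasureTheory.volume 0 R :=
    (continuous_pow 2).intervalIntegrable 0 R
  have cp3 : IntervalIntegrable (fun r : ℝ => r ^ 3) MeasureTheory.volume 0 R :=
    (continuous_pow 3).intervalIntegrable 0 R
  -- first conjunct
  have first : (∫ r in (0:ℝ)..R, r * (1 - r / R * Γ)) = A := by
    have : (fun r : ℝ => r * (1 - r / R * Γ))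
        = fun r : ℝ => r - (Γ / R) * r ^ 2 := by
      funext r; field_simp
    rw [this, intervalIntegral.integral_sub cp1 (cp2.const_mul _),
      intervalIntegral.integral_const_mul, ip1, ip2]
    show _ = R ^ 2 * (1 / 2 - Γ / 3)
    field_simp
  -- J0
  have hJ0 : (∫ r in (0:ℝ)..R, r * W r) = R ^ 2 * γ / (2 * (γ + 2)) := by
    have : (fun r : ℝ => r * W r) = fun r : ℝ => r - r * (r / R) ^ γ := by
      funext r; simp only [W]; ring
    rw [this, intervalIntegral.integral_sub cp1 c1, ip1, i1]
    field_simp; ring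
  have hJ0ne : (∫ r in (0:ℝ)..R, r * W r) ≠ 0 := by
    rw [hJ0]; positivity
  -- numerator
  have hN : (∫ r in (0:ℝ)..R, (1 - r / R * Γ) ^ 2 * (r * W r))
      = (R ^ 2 / 2 - 2 * (Γ / R) * (R ^ 3 / 3) + (Γ / R) ^ 2 * (R ^ 4 / 4))
        - (R ^ 2 / (γ + 2) - 2 * (Γ / R) * (R ^ 3 / (γ + 3))
            + (Γ / R) ^ 2 * (R ^ 4 / (γ + 4))) := by
    have : (fun r : ℝ => (1 - r / R * Γ) ^ 2 * (r * W r))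
        = fun r : ℝ => (r - 2 * (Γ / R) * r ^ 2 + (Γ / R) ^ 2 * r ^ 3)
            - (r * (r / R) ^ γ - 2 * (Γ / R) * (r ^ 2 * (r / R) ^ γ)
                + (Γ / R) ^ 2 * (r ^ 3 * (r / R) ^ γ)) := by
      funext r; simp only [W]; ring
    rw [this, intervalIntegral.integral_sub
        (((cp1.sub (cp2.const_mul _)).add (cp3.const_mul _)))
        (((c1.sub (c2.const_mul _)).add (c3.const_mul _))),
      intervalIntegral.integral_add (cp1.sub (cp2.const_mul _)) (cp3.const_mul _),
      intervalIntegral.integral_sub cp1 (cp2.const_mul _),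
      intervalIntegral.integral_add (c1.sub (c2.const_mul _)) (c3.const_mul _),
      intervalIntegral.integral_sub c1 (c2.const_mul _),
      intervalIntegral.integral_const_mul, intervalIntegral.integral_const_mul,
      intervalIntegral.integral_const_mul, intervalIntegral.integral_const_mul,
      ip1, ip2, ip3, i1, i2, i3]
  refine ⟨first, ?_⟩
  have hes : es / A = 1 / (∫ r in (0:ℝ)..R, r * W r) := by
    show A / (∫ r in (0:ℝ)..R, r * W r) / A = _
    rw [div_div, mul_comm, ← div_div, div_self hA]
  rw [hes, hN, hJ0]
  field_simp
  ring
end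

section
/- Let γ > 0, R > 0, Γ ∈ ℝ, u ∈ ℝ, and assume A := R²·(1/2 − Γ/3) and e_s := A/∫₀^R r·(1 − (r/R)^γ) dr, so that e_s = 2A(γ+2)/(γR²) since ∫₀^R r(1 − (r/R)^γ) dr = R²γ/(2(γ+2)). Define, for 0 < r ≤ R, |J|(r) = r(1 − (r/R)Γ) and V_s(r) = e_s·(r/|J|(r))·(1 − (r/R)^γ)·u. Then the function r ↦ |J|(r)·d/dr[ (|J|(r)/r)²·V_s(r) ] evaluated at r = R equals −(γ+2)·(1 − Γ)²·(2A/R²)·u. -/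
/-- The closed form of the axial viscous source term of the 2D blood-flow model:
`[|J| ∂_r((|J|/r)² V_s)]_{r=R} = −(γ+2)(1−Γ)²(2A/R²)u` for the Hagen–Poiseuille
profile `V_s = e_s(r/|J|)(1 − (r/R)^γ)u`. -/
theorem stmt19 (γ R Γ u : ℝ) (hγ : 0 < γ) (hR : 0 < R) :
    let A := R ^ 2 * (1 / 2 - Γ / 3)
    let J : ℝ → ℝ := fun r => r * (1 - r / R * Γ)
    let es := A / ∫ r in (0:ℝ)..R, r * (1 - (r / R) ^ γ)
    let Vs : ℝ → ℝ := fun r => es * (r / J r) * (1 - (r / R) ^ γ) * u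
    (∫ r in (0:ℝ)..R, r * (1 - (r / R) ^ γ)) = R ^ 2 * γ / (2 * (γ + 2)) ∧
    es = 2 * A * (γ + 2) / (γ * R ^ 2) ∧
    J R * deriv (fun r' => (J r' / r') ^ 2 * Vs r') R
      = -(γ + 2) * (1 - Γ) ^ 2 * (2 * A / R ^ 2) * u := by
  intro A J es Vs
  have hR0 : R ≠ 0 := hR.ne'
  have hγ2 : γ + 2 ≠ 0 := by linarith
  -- Part 1
  have hint : (∫ r in (0:ℝ)..R, r * (1 - (r / R) ^ γ)) = R ^ 2 * γ / (2 * (γ + 2)) := by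
    have hcong : ∀ r ∈ Set.uIcc (0:ℝ) R, r * (1 - (r / R) ^ γ)
        = r - r ^ (γ + 1) / R ^ γ := by
      intro r hr
      rw [Set.uIcc_of_le hR.le] at hr
      have hr0 : 0 ≤ r := hr.1
      rw [Real.div_rpow hr0 hR.le]
      rcases eq_or_lt_of_le hr0 with h0 | h0
      · simp [← h0, Real.zero_rpow hγ.ne', Real.zero_rpow (by linarith : γ + 1 ≠ 0)]
      · rw [Real.rpow_add h0, Real.rpow_one]
        field_simp
    rw [intervalIntegral.integral_congr hcong]
    have hi1 : IntervalIntegrable (fun r : ℝ => r) MeasureTheory.volume 0 R :=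
      (continuous_id).intervalIntegrable 0 R
    have hi2 : IntervalIntegrable (fun r : ℝ => r ^ (γ + 1) / R ^ γ)
        MeasureTheory.volume 0 R := by
      apply ContinuousOn.intervalIntegrable
      apply ContinuousOn.div_const
      intro x _
      exact (Real.continuousAt_rpow_const x (γ + 1) (Or.inr (by linarith))).continuousWithinAt
    rw [intervalIntegral.integral_sub hi1 hi2, intervalIntegral.integral_div,
      integral_rpow (Or.inl (by linarith : (-1:ℝ) < γ + 1))]
    have hid : (∫ x in (0:ℝ)..R, x) = R ^ 2 / 2 := by simp
    rw [hid]
    have hpow : R ^ (γ + 1 + 1) = R ^ 2 * R ^ γ := by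
      rw [← Real.rpow_two, ← Real.rpow_add hR]; ring_nf
    rw [Real.zero_rpow (by linarith : γ + 1 + 1 ≠ 0), hpow]
    have hRγ : R ^ γ ≠ 0 := (Real.rpow_pos_of_pos hR γ).ne'
    field_simp
    ring
  have hes : es = 2 * A * (γ + 2) / (γ * R ^ 2) := by
    show A / _ = _
    rw [hint]
    field_simp
  refine ⟨hint, hes, ?_⟩
  -- derivative part
  set g : ℝ → ℝ := fun r => es * u * ((1 - r / R * Γ) * (1 - (r / R) ^ γ)) with hgdef
  have hev : (fun r' => (J r' / r') ^ 2 * Vs r') =ᶠ[nhds R] g := by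
    filter_upwards [eventually_gt_nhds hR] with r hr
    have hr0 : r ≠ 0 := hr.ne'
    show (J r / r) ^ 2 * Vs r = es * u * ((1 - r / R * Γ) * (1 - (r / R) ^ γ))
    have hJ : J r / r = 1 - r / R * Γ := by
      show r * (1 - r / R * Γ) / r = _
      rw [mul_comm, mul_div_assoc, div_self hr0, mul_one]
    rw [hJ]
    show _ * (es * (r / (r * (1 - r / R * Γ))) * (1 - (r / R) ^ γ) * u) = _
    rcases eq_or_ne (1 - r / R * Γ) 0 with hc | hc
    · simp [hc]
    · have hc' : R - r * Γ ≠ 0 := by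
        intro h; apply hc; field_simp; linarith
      have hrr : r / (r * (1 - r / R * Γ)) = 1 / (1 - r / R * Γ) := by
        rw [← div_div, div_self hr0]
      rw [hrr]
      field_simp
  have h1 : HasDerivAt (fun r : ℝ => r / R) (1 / R) R := by
    simpa using (hasDerivAt_id R).div_const R
  have h2 : HasDerivAt (fun r : ℝ => (r / R) ^ γ) (γ / R) R := by
    have hRR : R / R = 1 := div_self hR0
    have := h1.rpow_const (p := γ) (Or.inl (by rw [hRR]; norm_num))
    simpa [hRR, Real.one_rpow, div_eq_mul_inv, mul_comm] using this
  have h3 : HasDerivAt (fun r : ℝ => 1 - r / R * Γ) (-(1 / R * Γ)) R :=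
    (h1.mul_const Γ).const_sub 1
  have h4 : HasDerivAt (fun r : ℝ => 1 - (r / R) ^ γ) (-(γ / R)) R :=
    h2.const_sub 1
  have hmul := ((h3.mul h4).const_mul (es * u))
  have hderiv : deriv (fun r' => (J r' / r') ^ 2 * Vs r') R
      = es * u * (-(1 / R * Γ) * (1 - (R / R) ^ γ) + (1 - R / R * Γ) * -(γ / R)) := by
    rw [hev.deriv_eq]
    exact hmul.deriv
  rw [hderiv]
  show R * (1 - R / R * Γ) * _ = _
  rw [div_self hR0, Real.one_rpow, hes]
  field_simp
  ring
end
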